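/- Let i ∈ [1,n], j ∈ [1,i), k ∈ [1,j], b = low(i), c = low(j), d = low(j+1, i−1), and z = max{x ∈ (j,i) : low(x) = d}. Assume that neither (j < b and j < low(x) for some x ∈ (j,b)) nor (k < min{b,c} and k ≤ low(x) for some x ∈ [k, min{b,c})) holds, and assume j < b and z ≥ b. Then: (a) if k = j ≤ d, then γ^1_{[1,2]}(k,i:i,j) = γ^1_{[1,2]}(j) + 1; (b) if k < j and k ≤ d, then γ^1_{[1,2]}(k,i:i,j) = γ^1_{[1,2]}(k, j : j) + 1; (c) if d < k, then γ^1_{[1,2]}(k,i:i,j) = γ^1_{[1,2]}(d, j : j) + 1. -/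

import Mathlib

/-- `G` is a graph with vertex set `{1,…,n}` (all edges lie inside `{1,…,n}`),
whose adjacency satisfies the interval-graph numbering property: whenever
`i < j < k` and `i` is adjacent to `k`, then `j` is adjacent to `k`. -/
def GoodNumbering (G : SimpleGraph ℕ) (n : ℕ) : Prop :=
  (∀ u v : ℕ, G.Adj u v → u ∈ Finset.Icc 1 n ∧ v ∈ Finset.Icc 1 n) ∧
  (∀ i j k : ℕ, i < j → j < k → G.Adj i k → G.Adj j k)

/-- `low a = min N[a]`, the minimum of the closed neighborhood of `a`. -/
noncomputable def low (G : SimpleGraph ℕ) (a : ℕ) : ℕ :=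
  sInf {b : ℕ | b = a ∨ G.Adj a b}

/-- `lowI a b = min {low k : k ∈ [a,b]}`. -/
noncomputable def lowI (G : SimpleGraph ℕ) (a b : ℕ) : ℕ :=
  sInf (low G '' Set.Icc a b)

/-- `maxlow a = max {low k : low a ≤ k ≤ a}`. -/
noncomputable def maxlow (G : SimpleGraph ℕ) (a : ℕ) : ℕ :=
  sSup (low G '' Set.Icc (low G a) a)

/-- `D` is a `[1,2]`-dominating set of the induced subgraph `G[1,i]`:
`D ⊆ [1,i]` and every vertex of `[1,i]` outside `D` has at least one and at
most two neighbors in `D`. -/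
def Dom12 (G : SimpleGraph ℕ) (i : ℕ) (D : Finset ℕ) : Prop :=
  D ⊆ Finset.Icc 1 i ∧
  ∀ v ∈ Finset.Icc 1 i, v ∉ D →
    1 ≤ {u ∈ (D : Set ℕ) | G.Adj v u}.ncard ∧ {u ∈ (D : Set ℕ) | G.Adj v u}.ncard ≤ 2

/-- The minimum (in `ℕ∞`, with `sInf ∅ = ⊤`) of the cardinalities of the
`[1,2]`-dominating sets `D` of `G[1,i]` satisfying the extra property `P`. -/
noncomputable def gval (G : SimpleGraph ℕ) (i : ℕ) (P : Finset ℕ → Prop) : ℕ∞ :=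
  sInf {k : ℕ∞ | ∃ D : Finset ℕ, Dom12 G i D ∧ P D ∧ (D.card : ℕ∞) = k}

/-- `γ_{[1,2]}(i)`. -/
noncomputable def g12 (G : SimpleGraph ℕ) (i : ℕ) : ℕ∞ :=
  gval G i fun _ => True

/-- `γ⁰_{[1,2]}(j,i)`: no vertex of `[j,i]` is in `D`. -/
noncomputable def g0I (G : SimpleGraph ℕ) (j i : ℕ) : ℕ∞ :=
  gval G i fun D => ∀ x ∈ Finset.Icc j i, x ∉ D

/-- `γ⁰_{[1,2]}(j,i:k)`: `k ∈ D` and no other vertex of `[j,i]` is in `D`. -/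
noncomputable def g0Ik (G : SimpleGraph ℕ) (j i k : ℕ) : ℕ∞ :=
  gval G i fun D => k ∈ D ∧ ∀ x ∈ Finset.Icc j i, x ≠ k → x ∉ D

/-- `γ¹_{[1,2]}(i)`: `i ∈ D`. -/
noncomputable def g1 (G : SimpleGraph ℕ) (i : ℕ) : ℕ∞ :=
  gval G i fun D => i ∈ D

/-- `γ¹_{[1,2]}(j,i:i)`: `i ∈ D` and no vertex of `[j,i)` is in `D`. -/
noncomputable def g1I (G : SimpleGraph ℕ) (j i : ℕ) : ℕ∞ :=
  gval G i fun D => i ∈ D ∧ ∀ x ∈ Finset.Ico j i, x ∉ D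

/-- `γ¹_{[1,2]}(k,i:i,j)`: `i, j ∈ D` and no other vertex of `[k,i)` is in `D`. -/
noncomputable def g1Ij (G : SimpleGraph ℕ) (k i j : ℕ) : ℕ∞ :=
  gval G i fun D => i ∈ D ∧ j ∈ D ∧ ∀ x ∈ Finset.Ico k i, x ≠ j → x ∉ D

/-- `γ¹_{[1,2]}(l,i:i,j,k)`: `i, j, k ∈ D` and no other vertex of `[l,i)` is in `D`. -/
noncomputable def g1Ijk (G : SimpleGraph ℕ) (l i j k : ℕ) : ℕ∞ :=
  gval G i fun D => i ∈ D ∧ j ∈ D ∧ k ∈ D ∧ ∀ x ∈ Finset.Ico l i, x ≠ j → x ≠ k → x ∉ D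

/-- `γ¹¹_{[1,2]}(l,i:i,j,k)`: `i, j ∈ D`, all of `[l,k] ⊆ D`, and no vertex of
`(k,i)` other than `j` is in `D`. -/
noncomputable def g11Ijk (G : SimpleGraph ℕ) (l i j k : ℕ) : ℕ∞ :=
  gval G i fun D => i ∈ D ∧ j ∈ D ∧ (∀ x ∈ Finset.Icc l k, x ∈ D) ∧
    ∀ x ∈ Finset.Ioo k i, x ≠ j → x ∉ D

private lemma low_le_self (G : SimpleGraph ℕ) (a : ℕ) : low G a ≤ a :=
  Nat.sInf_le (Or.inl rfl)

private lemma low_spec (G : SimpleGraph ℕ) (a : ℕ) :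
    low G a = a ∨ G.Adj a (low G a) := by
  have := Nat.sInf_mem (⟨a, Or.inl rfl⟩ : {b : ℕ | b = a ∨ G.Adj a b}.Nonempty)
  exact this

private lemma adj_iff_low_le (G : SimpleGraph ℕ)
    (hG2 : ∀ i j k : ℕ, i < j → j < k → G.Adj i k → G.Adj j k)
    {x y : ℕ} (hyx : y < x) : G.Adj x y ↔ low G x ≤ y := by
  constructor
  · intro h; exact Nat.sInf_le (Or.inr h)
  · intro h
    rcases low_spec G x with h1 | h1
    · exact absurd h (by omega)
    rcases eq_or_lt_of_le h with heq | hlt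
    · exact heq ▸ h1
    · exact (hG2 (low G x) y x hlt hyx h1.symm).symm

private lemma enat_sInf_mem {S : Set ℕ∞} (hS : S.Nonempty) : sInf S ∈ S := by
  by_cases h : ∃ n : ℕ, (n : ℕ∞) ∈ S
  · obtain ⟨n, hn⟩ := h
    have hT : {m : ℕ | (m : ℕ∞) ∈ S}.Nonempty := ⟨n, hn⟩
    have hmem := Nat.sInf_mem hT
    have heq : sInf S = ((sInf {m : ℕ | (m : ℕ∞) ∈ S} : ℕ) : ℕ∞) := by
      apply le_antisymm
      · exact sInf_le hmem
      · apply le_sInf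
        intro x hx
        cases x with
        | top => exact le_top
        | coe m => exact_mod_cast Nat.sInf_le hx
    rw [heq]; exact hmem
  · obtain ⟨x, hx⟩ := hS
    have hxt : x = ⊤ := by
      cases x with
      | top => rfl
      | coe m => exact absurd ⟨m, hx⟩ h
    subst hxt
    have hS1 : S = {⊤} := Set.eq_singleton_iff_unique_mem.mpr ⟨hx, fun y hy => by
      cases y with
      | top => rfl
      | coe m => exact absurd ⟨m, hy⟩ h⟩
    rw [hS1]; simp

private lemma gval_succ (G : SimpleGraph ℕ) (i j : ℕ) (hij : j < i)
    (P Q : Finset ℕ → Prop)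
    (fwd : ∀ D, Dom12 G i D → P D → i ∈ D ∧ Dom12 G j (D.erase i) ∧ Q (D.erase i))
    (bwd : ∀ D, Dom12 G j D → Q D → Dom12 G i (insert i D) ∧ P (insert i D)) :
    gval G i P = gval G j Q + 1 := by
  have hAB : {m : ℕ∞ | ∃ D, Dom12 G i D ∧ P D ∧ (D.card : ℕ∞) = m}
      = (fun x => x + 1) '' {m : ℕ∞ | ∃ D, Dom12 G j D ∧ Q D ∧ (D.card : ℕ∞) = m} := by
    ext m
    constructor
    · rintro ⟨D, hD, hP, rfl⟩
      obtain ⟨hiD, hDom, hQ⟩ := fwd D hD hP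
      refine ⟨((D.erase i).card : ℕ∞), ⟨D.erase i, hDom, hQ, rfl⟩, ?_⟩
      have h1 := Finset.card_erase_add_one hiD
      simp only []
      rw [← h1]
      push_cast
      ring
    · rintro ⟨m', ⟨D, hD, hQ, rfl⟩, rfl⟩
      obtain ⟨hDom, hP⟩ := bwd D hD hQ
      have hiD : i ∉ D := fun h => absurd (Finset.mem_Icc.mp (hD.1 h)).2 (by omega)
      exact ⟨insert i D, hDom, hP, by
        rw [Finset.card_insert_of_notMem hiD]; push_cast; ring⟩
  unfold gval
  rw [hAB]
  rcases Set.eq_empty_or_nonempty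
      {m : ℕ∞ | ∃ D, Dom12 G j D ∧ Q D ∧ (D.card : ℕ∞) = m} with he | hne
  · rw [he]; simp
  · have h1 := enat_sInf_mem hne
    apply le_antisymm
    · exact sInf_le ⟨_, h1, rfl⟩
    · apply le_sInf
      rintro x ⟨y, hy, rfl⟩
      exact add_le_add_left (sInf_le hy) 1

private lemma main_case (G : SimpleGraph ℕ) (i j k b d t : ℕ)
    (hG2 : ∀ i j k : ℕ, i < j → j < k → G.Adj i k → G.Adj j k)
    (h1j : 1 ≤ j) (hkj : k ≤ j) (hji : j < i)
    (hbdef : b = low G i) (hjb : j < b)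
    (hd : ∀ v, j < v → v < i → d ≤ low G v)
    (hnc1' : ∀ x, j < x → x < b → low G x ≤ j)
    (htj : t ≤ j) (htk : t ≤ k) (htd : t ≤ d)
    (hzarg : ∀ D, Dom12 G i D → i ∈ D → j ∈ D →
      (∀ x ∈ Finset.Ico k i, x ≠ j → x ∉ D) → ∀ x ∈ Finset.Ico t k, x ∉ D) :
    gval G i (fun D => i ∈ D ∧ j ∈ D ∧ ∀ x ∈ Finset.Ico k i, x ≠ j → x ∉ D)
      = gval G j (fun D => j ∈ D ∧ ∀ x ∈ Finset.Ico t j, x ∉ D) + 1 := by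
  have hadj : ∀ x y : ℕ, y < x → (G.Adj x y ↔ low G x ≤ y) :=
    fun x y h => adj_iff_low_le G hG2 h
  apply gval_succ G i j hji
  · -- forward direction
    rintro D hD ⟨hiD, hjD, hP⟩
    refine ⟨hiD, ⟨?_, ?_⟩, ?_, ?_⟩
    · intro u hu
      obtain ⟨hui, huD⟩ := Finset.mem_erase.mp hu
      have hu' := Finset.mem_Icc.mp (hD.1 huD)
      refine Finset.mem_Icc.mpr ⟨hu'.1, ?_⟩
      by_contra hcon
      exact hP u (Finset.mem_Ico.mpr ⟨by omega, by omega⟩) (by omega) huD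
    · intro v hv hvD'
      have hv' := Finset.mem_Icc.mp hv
      have hvD : v ∉ D := fun h => hvD' (Finset.mem_erase.mpr ⟨by omega, h⟩)
      have hset : {u ∈ (↑(D.erase i) : Set ℕ) | G.Adj v u}
          = {u ∈ (↑D : Set ℕ) | G.Adj v u} := by
        ext u
        simp only [Set.mem_sep_iff, Finset.mem_coe, Finset.mem_erase]
        constructor
        · rintro ⟨⟨_, h1⟩, h2⟩; exact ⟨h1, h2⟩
        · rintro ⟨h1, h2⟩
          refine ⟨⟨?_, h1⟩, h2⟩
          intro heq
          have hbv : low G i ≤ v := (hadj i v (by omega)).mp (heq ▸ h2.symm)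
          rw [← hbdef] at hbv
          omega
      rw [hset]
      exact hD.2 v (Finset.mem_Icc.mpr ⟨hv'.1, by omega⟩) hvD
    · exact Finset.mem_erase.mpr ⟨by omega, hjD⟩
    · intro x hx hxe
      obtain ⟨hx1, hx2⟩ := Finset.mem_Ico.mp hx
      have hxD := (Finset.mem_erase.mp hxe).2
      rcases le_or_gt k x with hkx | hkx
      · exact hP x (Finset.mem_Ico.mpr ⟨hkx, by omega⟩) (by omega) hxD
      · exact hzarg D hD hiD hjD hP x (Finset.mem_Ico.mpr ⟨hx1, hkx⟩) hxD
  · -- backward direction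
    rintro D hD ⟨hjD, hQ⟩
    have hDle : ∀ u ∈ D, u ≤ j := fun u hu => (Finset.mem_Icc.mp (hD.1 hu)).2
    have hDge : ∀ u ∈ D, 1 ≤ u := fun u hu => (Finset.mem_Icc.mp (hD.1 hu)).1
    refine ⟨⟨?_, ?_⟩, ?_, ?_, ?_⟩
    · intro u hu
      rcases Finset.mem_insert.mp hu with rfl | hu
      · exact Finset.mem_Icc.mpr ⟨by omega, le_rfl⟩
      · exact Finset.mem_Icc.mpr ⟨hDge u hu, by have := hDle u hu; omega⟩
    · intro v hv hvD
      have hv' := Finset.mem_Icc.mp hv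
      have hvi : v ≠ i := fun h => hvD (h ▸ Finset.mem_insert_self i D)
      have hvD' : v ∉ D := fun h => hvD (Finset.mem_insert_of_mem h)
      rcases le_or_gt v j with hvj | hvj
      · have hset : {u ∈ (↑(insert i D) : Set ℕ) | G.Adj v u}
            = {u ∈ (↑D : Set ℕ) | G.Adj v u} := by
          ext u
          simp only [Set.mem_sep_iff, Finset.coe_insert, Set.mem_insert_iff, Finset.mem_coe]
          constructor
          · rintro ⟨h1 | h1, h2⟩
            · have hbv : low G i ≤ v := (hadj i v (by omega)).mp (h1 ▸ h2.symm)
              rw [← hbdef] at hbv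
              omega
            · exact ⟨h1, h2⟩
          · rintro ⟨h1, h2⟩; exact ⟨Or.inr h1, h2⟩
        rw [hset]
        exact hD.2 v (Finset.mem_Icc.mpr ⟨hv'.1, hvj⟩) hvD'
      · have hvi' : v < i := by omega
        have hdv : d ≤ low G v := hd v hvj hvi'
        have hSsub : {u ∈ (↑(insert i D) : Set ℕ) | G.Adj v u} ⊆ ({i, j} : Set ℕ) := by
          intro u hu
          obtain ⟨hu1, hu2⟩ := Set.mem_sep_iff.mp hu
          rcases Finset.mem_insert.mp (Finset.mem_coe.mp hu1) with rfl | huD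
          · exact Set.mem_insert _ _
          · have huj := hDle u huD
            have hlu : low G v ≤ u := (hadj v u (by omega)).mp hu2
            have huj' : u = j := by
              by_contra hne
              exact hQ u (Finset.mem_Ico.mpr ⟨by omega, by omega⟩) huD
            exact Or.inr huj'
        have hfin : {u ∈ (↑(insert i D) : Set ℕ) | G.Adj v u}.Finite :=
          (insert i D).finite_toSet.subset (fun u hu => hu.1)
        constructor
        · rcases lt_or_ge v b with hvb | hvb
          · have hjS : j ∈ {u ∈ (↑(insert i D) : Set ℕ) | G.Adj v u} :=
              Set.mem_sep_iff.mpr ⟨Finset.mem_coe.mpr (Finset.mem_insert_of_mem hjD),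
               (hadj v j hvj).mpr (hnc1' v hvj hvb)⟩
            exact (Set.ncard_pos hfin).mpr ⟨j, hjS⟩
          · have hiS : i ∈ {u ∈ (↑(insert i D) : Set ℕ) | G.Adj v u} :=
              Set.mem_sep_iff.mpr ⟨Finset.mem_coe.mpr (Finset.mem_insert_self i D),
               ((hadj i v hvi').mpr (by rw [← hbdef]; omega)).symm⟩
            exact (Set.ncard_pos hfin).mpr ⟨i, hiS⟩
        · calc {u ∈ (↑(insert i D) : Set ℕ) | G.Adj v u}.ncard
              ≤ ({i, j} : Set ℕ).ncard :=
                Set.ncard_le_ncard hSsub ((Set.finite_singleton j).insert i)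
            _ ≤ 2 := by rw [Set.ncard_pair (by omega : i ≠ j)]
    · exact Finset.mem_insert_self i D
    · exact Finset.mem_insert_of_mem hjD
    · intro x hx hxj hmem
      obtain ⟨hx1, hx2⟩ := Finset.mem_Ico.mp hx
      rcases Finset.mem_insert.mp hmem with rfl | hxD
      · omega
      · have := hDle x hxD
        exact hQ x (Finset.mem_Ico.mpr ⟨by omega, by omega⟩) hxD

/-- Lemma (iii): case `j < b` and `z ≥ b`, where `b = low(i)`, `c = low(j)`,
`d = low(j+1, i-1)` and `z = max {x ∈ (j,i) : low(x) = d}`. -/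
theorem g1Ij_recurrence_case_iii (G : SimpleGraph ℕ) (n : ℕ) (hn : 1 ≤ n)
    (hG : GoodNumbering G n) (i j k b c d z : ℕ) (hi : i ∈ Finset.Icc 1 n)
    (hj : j ∈ Finset.Ico 1 i) (hk : k ∈ Finset.Icc 1 j)
    (hbdef : b = low G i) (hcdef : c = low G j)
    (hddef : d = lowI G (j + 1) (i - 1))
    (hzdef : z = sSup {x : ℕ | x ∈ Set.Ioo j i ∧ low G x = d})
    (hnc1 : ¬ (j < b ∧ ∃ x ∈ Finset.Ioo j b, j < low G x))
    (hnc2 : ¬ (k < min b c ∧ ∃ x ∈ Finset.Ico k (min b c), k ≤ low G x))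
    (hjb : j < b) (hz : b ≤ z) :
    ((k = j ∧ j ≤ d) → g1Ij G k i j = g1 G j + 1) ∧
    ((k < j ∧ k ≤ d) → g1Ij G k i j = g1I G k j + 1) ∧
    (d < k → g1Ij G k i j = g1I G d j + 1) := by
  obtain ⟨hj1, hji⟩ := Finset.mem_Ico.mp hj
  obtain ⟨hk1, hkj⟩ := Finset.mem_Icc.mp hk
  have hG2 := hG.2
  have hadj : ∀ x y : ℕ, y < x → (G.Adj x y ↔ low G x ≤ y) :=
    fun x y h => adj_iff_low_le G hG2 h
  have hd : ∀ v, j < v → v < i → d ≤ low G v := by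
    intro v h1 h2
    rw [hddef]
    exact Nat.sInf_le ⟨v, ⟨by omega, by omega⟩, rfl⟩
  have hnc1' : ∀ x, j < x → x < b → low G x ≤ j := by
    intro x h1 h2
    by_contra h
    exact hnc1 ⟨hjb, ⟨x, Finset.mem_Ioo.mpr ⟨h1, h2⟩, by omega⟩⟩
  -- facts about z
  have hSbdd : BddAbove {x : ℕ | x ∈ Set.Ioo j i ∧ low G x = d} :=
    ⟨i, fun x hx => le_of_lt hx.1.2⟩
  have hSne : {x : ℕ | x ∈ Set.Ioo j i ∧ low G x = d}.Nonempty := by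
    by_contra h
    rw [Set.not_nonempty_iff_eq_empty] at h
    rw [h] at hzdef
    simp at hzdef
    omega
  have hzS : z ∈ {x : ℕ | x ∈ Set.Ioo j i ∧ low G x = d} := by
    rw [hzdef]; exact Nat.sSup_mem hSne hSbdd
  obtain ⟨hzIoo, hzlow⟩ := hzS
  obtain ⟨hzj, hzi⟩ := Set.mem_Ioo.mp hzIoo
  refine ⟨?_, ?_, ?_⟩
  · -- case (a) : k = j ≤ d
    rintro ⟨hkeq, hjd⟩
    rw [hkeq]
    have hg : gval G j (fun D => j ∈ D ∧ ∀ x ∈ Finset.Ico j j, x ∉ D) = g1 G j := by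
      unfold g1 gval
      congr 1
      ext m
      constructor
      · rintro ⟨D, h1, ⟨h2, _⟩, h3⟩; exact ⟨D, h1, h2, h3⟩
      · rintro ⟨D, h1, h2, h3⟩; exact ⟨D, h1, ⟨h2, by simp⟩, h3⟩
    have hm := main_case G i j j b d j hG2 hj1 le_rfl hji hbdef hjb hd hnc1'
      le_rfl le_rfl hjd
      (by intro D _ _ _ _ x hx; exact absurd hx (by simp))
    unfold g1Ij
    rw [← hg]
    exact hm
  · -- case (b) : k < j, k ≤ d
    rintro ⟨hkj', hkd⟩
    have hm := main_case G i j k b d k hG2 hj1 hkj hji hbdef hjb hd hnc1'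
      hkj'.le le_rfl hkd
      (by intro D _ _ _ _ x hx; exact absurd hx (by simp))
    unfold g1Ij g1I
    exact hm
  · -- case (c) : d < k
    intro hdk
    have hzarg : ∀ D, Dom12 G i D → i ∈ D → j ∈ D →
        (∀ x ∈ Finset.Ico k i, x ≠ j → x ∉ D) → ∀ x ∈ Finset.Ico d k, x ∉ D := by
      intro D hD hiD hjD hP x hx hxD
      obtain ⟨hx1, hx2⟩ := Finset.mem_Ico.mp hx
      have hzD : z ∉ D := hP z (Finset.mem_Ico.mpr ⟨by omega, hzi⟩) (by omega)
      have hcnt := (hD.2 z (Finset.mem_Icc.mpr ⟨by omega, by omega⟩) hzD).2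
      have hsub : ({x, j, i} : Set ℕ) ⊆ {u ∈ (↑D : Set ℕ) | G.Adj z u} := by
        intro u hu
        simp only [Set.mem_insert_iff, Set.mem_singleton_iff] at hu
        rcases hu with rfl | rfl | rfl
        · exact Set.mem_sep_iff.mpr ⟨Finset.mem_coe.mpr hxD,
            (hadj z u (by omega)).mpr (by rw [hzlow]; omega)⟩
        · exact Set.mem_sep_iff.mpr ⟨Finset.mem_coe.mpr hjD,
            (hadj z u (by omega)).mpr (by rw [hzlow]; omega)⟩
        · exact Set.mem_sep_iff.mpr ⟨Finset.mem_coe.mpr hiD,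
            ((hadj u z hzi).mpr (by rw [← hbdef]; omega)).symm⟩
      have h3 : ({x, j, i} : Set ℕ).ncard = 3 :=
        Set.ncard_eq_three.mpr ⟨x, j, i, by omega, by omega, by omega, rfl⟩
      have hfin : {u ∈ (↑D : Set ℕ) | G.Adj z u}.Finite :=
        D.finite_toSet.subset fun u hu => hu.1
      have hle := Set.ncard_le_ncard hsub hfin
      omega
    have hm := main_case G i j k b d d hG2 hj1 hkj hji hbdef hjb hd hnc1'
      (by omega) hdk.le le_rfl hzarg
    unfold g1Ij g1I
    exact hm
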